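/- For any strategy σ on a justified AJM game A: (1) any two skeletons of σ are equivalent under the preorder ⊑ (each is ⊑ the other); (2) σ is the union of all its skeletons; (3) for any skeleton φ of σ, σ is the union of all skeletons ψ with ψ ⊑ φ and φ ⊑ ψ. -/
import Mathlib


/- Justified AJM games, after Abramsky's game semantics for access control. -/

namespace AJM

inductive Pol where
  | P
  | O
deriving DecidableEq

inductive QA where
  | Q
  | Ans
deriving DecidableEq

def Pol.flip : Pol → Pol
  | .P => .O
  | .O => .P

/-- Well-bracketed strings over moves (condition (p4)). -/
inductive WB {M : Type} (lab : M → Pol × QA) (just : M → Option M) : List M → Prop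
  | nil : WB lab just []
  | wrap (a q : M) (u : List M) : (lab a).2 = QA.Ans → just a = some q →
      WB lab just u → WB lab just (q :: (u ++ [a]))
  | append (u v : List M) : WB lab just u → WB lab just v → WB lab just (u ++ v)

/-- Conditions (p1)–(p5): Opponent starts, alternation, linearity,
well-bracketing, justifiers occur before their moves. -/
def ValidSeq {M : Type} (lab : M → Pol × QA) (just : M → Option M) (s : List M) : Prop :=
  (∀ m, s.head? = some m → (lab m).1 = Pol.O) ∧
  List.Chain' (fun m m' => (lab m).1 ≠ (lab m').1) s ∧
  s.Nodup ∧
  (∃ t, s <+: t ∧ WB lab just t) ∧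
  (∀ s₁ m s₂, s = s₁ ++ m :: s₂ → ∀ m', just m = some m' → m' ∈ s₁)

/-- A justified AJM game (the data). -/
structure Game where
  M : Type
  lab : M → Pol × QA
  just : M → Option M
  pos : Set (List M)
  equiv : List M → List M → Prop

namespace Game

/-- The axioms making the data of a `Game` an actual justified AJM game. -/
structure Valid (A : Game) : Prop where
  just_wf : WellFounded fun m m' : A.M => A.just m' = some m
  just_pol : ∀ m m', A.just m = some m' → (A.lab m).1 ≠ (A.lab m').1
  just_qa : ∀ m m', A.just m = some m' → (A.lab m).2 = QA.Ans → (A.lab m').2 = QA.Q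
  ans_justified : ∀ m, (A.lab m).2 = QA.Ans → A.just m ≠ none
  pos_nonempty : A.pos.Nonempty
  pos_prefix_closed : ∀ s t : List A.M, s <+: t → t ∈ A.pos → s ∈ A.pos
  pos_valid : ∀ s ∈ A.pos, ValidSeq A.lab A.just s
  equiv_mem : ∀ s t, A.equiv s t → s ∈ A.pos ∧ t ∈ A.pos
  equiv_refl : ∀ s ∈ A.pos, A.equiv s s
  equiv_symm : ∀ s t, A.equiv s t → A.equiv t s
  equiv_trans : ∀ s t u, A.equiv s t → A.equiv t u → A.equiv s u
  equiv_lab : ∀ s t, A.equiv s t → s.map A.lab = t.map A.lab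
  equiv_prefix : ∀ s t s' t', A.equiv s t → s' <+: s → t' <+: t →
      s'.length = t'.length → A.equiv s' t'
  equiv_ext : ∀ s t a, A.equiv s t → s ++ [a] ∈ A.pos → ∃ b, A.equiv (s ++ [a]) (t ++ [b])

/-- A strategy on a game: a non-empty set of even-length positions that is
causally consistent, representation independent and deterministic. -/
structure IsStrategy (A : Game) (σ : Set (List A.M)) : Prop where
  subset_pos : σ ⊆ A.pos
  even_length : ∀ s ∈ σ, Even s.length
  nonempty : σ.Nonempty
  causal : ∀ s a b, s ++ [a, b] ∈ σ → s ∈ σ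
  repind : ∀ s t, s ∈ σ → A.equiv s t → t ∈ σ
  det : ∀ s t a b a' b', s ++ [a, b] ∈ σ → t ++ [a', b'] ∈ σ →
      A.equiv (s ++ [a]) (t ++ [a']) → A.equiv (s ++ [a, b]) (t ++ [a', b'])

/-- A skeleton of a strategy `σ`: a non-empty, causally consistent subset of
`σ` satisfying Uniformization. -/
structure IsSkeletonOf (A : Game) (φ σ : Set (List A.M)) : Prop where
  nonempty : φ.Nonempty
  subset : φ ⊆ σ
  causal : ∀ s a b, s ++ [a, b] ∈ φ → s ∈ φ
  uniformization : ∀ s a b, s ++ [a, b] ∈ σ → s ∈ φ → ∃! b', s ++ [a, b'] ∈ φ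

/-- A skeleton in the abstract sense (independently of any strategy):
a non-empty, causally consistent set of even-length positions satisfying
Functional Determinacy and Functional Representation Independence. -/
structure IsSkeleton (A : Game) (φ : Set (List A.M)) : Prop where
  subset_pos : φ ⊆ A.pos
  even_length : ∀ s ∈ φ, Even s.length
  nonempty : φ.Nonempty
  causal : ∀ s a b, s ++ [a, b] ∈ φ → s ∈ φ
  funDet : ∀ s a b c, s ++ [a, b] ∈ φ → s ++ [a, c] ∈ φ → b = c
  funRepInd : ∀ s t a b a', s ++ [a, b] ∈ φ → t ∈ φ →
      A.equiv (s ++ [a]) (t ++ [a']) →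
      ∃! b', t ++ [a', b'] ∈ φ ∧ A.equiv (s ++ [a, b]) (t ++ [a', b'])

/-- `φ• = { t | ∃ s ∈ φ, s ≈_A t }`, the saturation of `φ` under `≈_A`. -/
def dot (A : Game) (φ : Set (List A.M)) : Set (List A.M) :=
  {t | ∃ s ∈ φ, A.equiv s t}

/-- The preorder `φ ⊑ ψ` on skeletons. -/
def Subeq (A : Game) (φ ψ : Set (List A.M)) : Prop :=
  ∀ s a b s' a', s ++ [a, b] ∈ φ → s' ∈ ψ → A.equiv (s ++ [a]) (s' ++ [a']) →
    ∃ b', s' ++ [a', b'] ∈ ψ ∧ A.equiv (s ++ [a, b]) (s' ++ [a', b'])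

end Game

end AJM

section Aux

open AJM Game

variable {A : Game} {σ φ ψ : Set (List A.M)}

private lemma app2 (s : List A.M) (a b : A.M) : s ++ [a] ++ [b] = s ++ [a, b] := by simp

private lemma exists_snoc2 {s : List A.M} (he : Even s.length) (hne : s ≠ []) :
    ∃ u a b, s = u ++ [a, b] := by
  rcases List.eq_nil_or_concat s with h | ⟨t, b, rfl⟩
  · exact absurd h hne
  rcases List.eq_nil_or_concat t with rfl | ⟨u, a, rfl⟩
  · obtain ⟨k, hk⟩ := he; simp at hk; omega
  · exact ⟨u, a, b, by simp⟩

private lemma nil_mem (hne : φ.Nonempty) (hev : ∀ s ∈ φ, Even s.length)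
    (hc : ∀ s a b, s ++ [a, b] ∈ φ → s ∈ φ) : ([] : List A.M) ∈ φ := by
  obtain ⟨s, hs⟩ := hne
  suffices H : ∀ n (s : List A.M), s.length = n → s ∈ φ → ([] : List A.M) ∈ φ from
    H _ s rfl hs
  intro n
  induction n using Nat.strong_induction_on with
  | _ n ih =>
    intro s hlen hsφ
    rcases eq_or_ne s [] with rfl | hne'
    · exact hsφ
    · obtain ⟨u, a, b, rfl⟩ := exists_snoc2 (hev _ hsφ) hne'
      have hl : u.length + 2 = n := by simpa using hlen
      exact ih u.length (by omega) u rfl (hc _ _ _ hsφ)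

private lemma even_prefix_mem (hσ : IsStrategy A σ) :
    ∀ t ∈ σ, ∀ u, u <+: t → Even u.length → u ∈ σ := by
  suffices H : ∀ n (t : List A.M), t.length = n → t ∈ σ → ∀ u, u <+: t → Even u.length → u ∈ σ
    from fun t ht u hu he => H _ t rfl ht u hu he
  intro n
  induction n using Nat.strong_induction_on with
  | _ n ih =>
    intro t hlen ht u hu he
    rcases eq_or_ne u t with rfl | hne
    · exact ht
    · have hlt : u.length < t.length :=
        lt_of_le_of_ne hu.length_le (fun h => hne (hu.eq_of_length h))
      have hne' : t ≠ [] := by rintro rfl; simp at hlt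
      obtain ⟨v, a, b, rfl⟩ := exists_snoc2 (hσ.even_length t ht) hne'
      have hvlen : v.length + 2 = n := by simpa using hlen
      have hule : u.length ≤ v.length := by
        obtain ⟨k, hk⟩ := he
        obtain ⟨m, hm⟩ := hσ.even_length _ ht
        simp only [List.length_append, List.length_cons, List.length_nil] at hlt hm
        omega
      have huv : u <+: v :=
        List.prefix_of_prefix_length_le hu (List.prefix_append _ _) hule
      exact ih v.length (by omega) v rfl (hσ.causal _ _ _ ht) u huv he

private lemma subeq_of_skeletonOf (hA : A.Valid) (hσ : IsStrategy A σ)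
    (hφ : IsSkeletonOf A φ σ) (hψ : IsSkeletonOf A ψ σ) : Subeq A φ ψ := by
  intro s a b s' a' hs hs' heq
  have hsσ : s ++ [a, b] ∈ σ := hφ.subset hs
  have hpos : (s ++ [a]) ++ [b] ∈ A.pos := by rw [app2]; exact hσ.subset_pos hsσ
  obtain ⟨c, hc⟩ := hA.equiv_ext _ _ b heq hpos
  rw [app2, app2] at hc
  have hcσ : s' ++ [a', c] ∈ σ := hσ.repind _ _ hsσ hc
  obtain ⟨b', hb', huniq⟩ := hψ.uniformization s' a' c hcσ hs'
  have hb'σ : s' ++ [a', b'] ∈ σ := hψ.subset hb'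
  have hprefpos : s' ++ [a'] ∈ A.pos :=
    hA.pos_prefix_closed _ _ ⟨[c], by simp⟩ (hσ.subset_pos hcσ)
  have hdet := hσ.det s' s' a' c a' b' hcσ hb'σ (hA.equiv_refl _ hprefpos)
  exact ⟨b', hb', hA.equiv_trans _ _ _ hc hdet⟩

private lemma isSkeleton_of_skeletonOf (hA : A.Valid) (hσ : IsStrategy A σ)
    (hφ : IsSkeletonOf A φ σ) : IsSkeleton A φ where
  subset_pos := fun s hs => hσ.subset_pos (hφ.subset hs)
  even_length := fun s hs => hσ.even_length s (hφ.subset hs)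
  nonempty := hφ.nonempty
  causal := hφ.causal
  funDet := fun s a b c hb hc => by
    have hs : s ∈ φ := hφ.causal _ _ _ hb
    obtain ⟨b', _, huniq⟩ := hφ.uniformization s a b (hφ.subset hb) hs
    rw [huniq b hb, huniq c hc]
  funRepInd := fun s t a b a' hs ht heq => by
    obtain ⟨b', hb', heq'⟩ := subeq_of_skeletonOf hA hσ hφ hφ s a b t a' hs ht heq
    refine ⟨b', ⟨hb', heq'⟩, fun c hcc => ?_⟩
    obtain ⟨d, _, huniq⟩ := hφ.uniformization t a' c (hφ.subset hcc.1) ht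
    rw [huniq c hcc.1, huniq b' hb']

private lemma exists_equiv_of_skeleton (hA : A.Valid) (hσ : IsStrategy A σ)
    (hφ : IsSkeletonOf A φ σ) (hψ : IsSkeleton A ψ) (h1 : Subeq A ψ φ) :
    ∀ s ∈ ψ, ∃ t ∈ φ, A.equiv s t := by
  have hnilpos : ([] : List A.M) ∈ A.pos := by
    obtain ⟨t, ht⟩ := hA.pos_nonempty
    exact hA.pos_prefix_closed _ _ List.nil_prefix ht
  suffices H : ∀ n (s : List A.M), s.length = n → s ∈ ψ → ∃ t ∈ φ, A.equiv s t from
    fun s hs => H _ s rfl hs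
  intro n
  induction n using Nat.strong_induction_on with
  | _ n ih =>
    intro s hlen hs
    rcases eq_or_ne s [] with rfl | hne'
    · exact ⟨[], nil_mem hφ.nonempty
        (fun u hu => hσ.even_length u (hφ.subset hu)) hφ.causal, hA.equiv_refl _ hnilpos⟩
    · obtain ⟨u, a, b, rfl⟩ := exists_snoc2 (hψ.even_length _ hs) hne'
      have hl : u.length + 2 = n := by simpa using hlen
      obtain ⟨t, ht, hequiv⟩ := ih u.length (by omega) u rfl (hψ.causal _ _ _ hs)
      have hupos : u ++ [a] ∈ A.pos :=
        hA.pos_prefix_closed _ _ ⟨[b], by simp⟩ (hψ.subset_pos hs)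
      obtain ⟨a', ha'⟩ := hA.equiv_ext _ _ a hequiv hupos
      obtain ⟨b', hb', heq'⟩ := h1 u a b t a' hs ht ha'
      exact ⟨t ++ [a', b'], hb', heq'⟩

private lemma exists_skeletonOf_mem (hA : A.Valid) (hσ : IsStrategy A σ)
    {s₀ : List A.M} (hs₀ : s₀ ∈ σ) : ∃ φ, IsSkeletonOf A φ σ ∧ s₀ ∈ φ := by
  classical
  set ch : List A.M → A.M → A.M := fun u a =>
    if h : ∃ b, u ++ [a, b] <+: s₀ then h.choose
    else if h : ∃ b, u ++ [a, b] ∈ σ then h.choose else a with hch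
  set φ : Set (List A.M) :=
    {t | t ∈ σ ∧ ∀ u a b, Even u.length → u ++ [a, b] <+: t → b = ch u a} with hφdef
  have factB : ∀ u a b, u ++ [a, b] <+: s₀ → ch u a = b := by
    intro u a b hb
    have h : ∃ b, u ++ [a, b] <+: s₀ := ⟨b, hb⟩
    have hc := h.choose_spec
    have h1 : u ++ [a, h.choose] <+: u ++ [a, b] :=
      List.prefix_of_prefix_length_le hc hb (by simp)
    have h2 : u ++ [a, h.choose] = u ++ [a, b] := h1.eq_of_length (by simp)
    have h3 : h.choose = b := by
      have h4 := List.append_cancel_left h2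
      simpa using h4
    simp only [hch]
    rw [dif_pos h]
    exact h3
  have factA : ∀ u a, Even u.length → (∃ b, u ++ [a, b] ∈ σ) → u ++ [a, ch u a] ∈ σ := by
    intro u a hu hex
    by_cases h : ∃ b, u ++ [a, b] <+: s₀
    · have hc := h.choose_spec
      have he : ch u a = h.choose := by simp only [hch]; rw [dif_pos h]
      rw [he]
      refine even_prefix_mem hσ s₀ hs₀ _ hc ?_
      obtain ⟨k, hk⟩ := hu
      exact ⟨k + 1, by simp [hk]; omega⟩
    · have he : ch u a = hex.choose := by simp only [hch]; rw [dif_neg h, dif_pos hex]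
      rw [he]; exact hex.choose_spec
  have hs₀φ : s₀ ∈ φ := ⟨hs₀, fun u a b _ hb => (factB u a b hb).symm⟩
  refine ⟨φ, ⟨⟨s₀, hs₀φ⟩, fun t ht => ht.1, ?_, ?_⟩, hs₀φ⟩
  · intro t a b htφ
    exact ⟨hσ.causal _ _ _ htφ.1, fun u a0 b0 hu hpre =>
      htφ.2 u a0 b0 hu (hpre.trans (List.prefix_append _ _))⟩
  · intro t a b hbσ htφ
    have htev : Even t.length := hσ.even_length t htφ.1
    have hmem : t ++ [a, ch t a] ∈ σ := factA t a htev ⟨b, hbσ⟩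
    refine ⟨ch t a, ⟨hmem, ?_⟩, ?_⟩
    · intro u a0 b0 hu hpre
      have hlen := hpre.length_le
      simp only [List.length_append, List.length_cons, List.length_nil] at hlen
      obtain ⟨k, hk⟩ := hu
      obtain ⟨m, hm⟩ := htev
      rcases le_or_gt (u.length + 2) t.length with hle | hgt
      · refine htφ.2 u a0 b0 ⟨k, hk⟩
          (List.prefix_of_prefix_length_le hpre (List.prefix_append _ _) (by simp; omega))
      · have hlen2 : u.length = t.length := by omega
        have heq : u ++ [a0, b0] = t ++ [a, ch t a] := hpre.eq_of_length (by simp; omega)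
        obtain ⟨h1, h2⟩ := List.append_inj heq hlen2
        injection h2 with e1 h2'
        injection h2' with e2 _
        subst h1; subst e1; exact e2
    · intro c hcφ
      exact hcφ.2 t a c htev (List.prefix_refl _)

end Aux

open AJM Game in
/-- For any strategy `σ`: (1) any two skeletons of `σ` are `⊑`-equivalent;
(2) `σ` is the union of all its skeletons; (3) for any skeleton `φ` of `σ`,
`σ` is the union of all skeletons `ψ` that are `⊑`-equivalent to `φ`. -/
theorem skeletons_of_strategy (A : Game) (hA : A.Valid)
    (σ : Set (List A.M)) (hσ : IsStrategy A σ) :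
    (∀ φ ψ, IsSkeletonOf A φ σ → IsSkeletonOf A ψ σ → Subeq A φ ψ ∧ Subeq A ψ φ) ∧
    (σ = {s | ∃ φ, IsSkeletonOf A φ σ ∧ s ∈ φ}) ∧
    (∀ φ, IsSkeletonOf A φ σ →
      σ = {s | ∃ ψ, IsSkeleton A ψ ∧ Subeq A ψ φ ∧ Subeq A φ ψ ∧ s ∈ ψ}) := by
  have part1 : ∀ φ ψ, IsSkeletonOf A φ σ → IsSkeletonOf A ψ σ → Subeq A φ ψ ∧ Subeq A ψ φ :=
    fun φ ψ hφ hψ => ⟨subeq_of_skeletonOf hA hσ hφ hψ, subeq_of_skeletonOf hA hσ hψ hφ⟩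
  refine ⟨part1, ?_, ?_⟩
  · ext s
    constructor
    · intro hs
      obtain ⟨φ, hφ, hsφ⟩ := exists_skeletonOf_mem hA hσ hs
      exact ⟨φ, hφ, hsφ⟩
    · rintro ⟨φ, hφ, hsφ⟩
      exact hφ.subset hsφ
  · intro φ hφ
    ext s
    constructor
    · intro hs
      obtain ⟨ψ, hψ, hsψ⟩ := exists_skeletonOf_mem hA hσ hs
      exact ⟨ψ, isSkeleton_of_skeletonOf hA hσ hψ, (part1 ψ φ hψ hφ).1, (part1 φ ψ hφ hψ).1, hsψ⟩
    · rintro ⟨ψ, hψ, h1, h2, hsψ⟩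
      obtain ⟨t, ht, heq⟩ := exists_equiv_of_skeleton hA hσ hφ hψ h1 s hsψ
      exact hσ.repind t s (hφ.subset ht) (hA.equiv_symm _ _ heq)
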